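/- For nonnegative integers m, n: ∑_{k=0}^{m} (k)_{n,λ} = (β_{n+1,λ}(m+1) - β_{n+1,λ})/(n+1), where β_{n,λ}(x) are the degenerate Bernoulli polynomials and β_{n,λ} = β_{n,λ}(0). -/

import Mathlib

open Finset PowerSeries

/-- Degenerate falling factorial `(x)_{n,λ} = x(x-λ)⋯(x-(n-1)λ)`. -/
noncomputable def dfall (l x : ℝ) (n : ℕ) : ℝ := ∏ i ∈ Finset.range n, (x - i * l)

/-- Degenerate Eulerian number `A_λ(n,k) = ∑_{i=0}^k C(n+1,i)(-1)^i (k-i+1)_{n,λ}`. -/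
noncomputable def degEulerianNum (l : ℝ) (n k : ℕ) : ℝ :=
  ∑ i ∈ Finset.range (k+1), ((n+1).choose i : ℝ) * (-1)^i * dfall l ((k : ℝ) - i + 1) n

/-- Degenerate Eulerian polynomial `A_{n,λ}(x) = ∑_{k=0}^n A_λ(n,k) x^k`. -/
noncomputable def degEulerianPoly (l : ℝ) (n : ℕ) (x : ℝ) : ℝ :=
  ∑ k ∈ Finset.range (n+1), degEulerianNum l n k * x^k

/-- Generalized binomial coefficient `binom(y,m) = y(y-1)⋯(y-m+1)/m!`. -/
noncomputable def genBinom (y : ℝ) (m : ℕ) : ℝ :=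
  (∏ i ∈ Finset.range m, (y - i)) / m.factorial

/-- Degenerate exponential `e_λ^x(t) = ∑_k (x)_{k,λ} t^k/k!` as a formal power series. -/
noncomputable def degExp (l x : ℝ) : PowerSeries ℝ :=
  PowerSeries.mk fun k => dfall l x k / k.factorial

/-- Degenerate Stirling number of the second kind (explicit formula). -/
noncomputable def degStirling2 (l : ℝ) (n k : ℕ) : ℝ :=
  (-1)^k / k.factorial * ∑ j ∈ Finset.range (k+1), (-1)^j * (k.choose j : ℝ) * dfall l j n

lemma dfall_zero (l x : ℝ) : dfall l x 0 = 1 := by simp [dfall]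

lemma dfall_succ (l x : ℝ) (n : ℕ) : dfall l x (n+1) = dfall l x n * (x - n * l) := by
  simp [dfall, Finset.prod_range_succ]

lemma dfall_vand (l x y : ℝ) (n : ℕ) :
    dfall l (x + y) n = ∑ k ∈ range (n+1), (n.choose k : ℝ) * dfall l x k * dfall l y (n - k) := by
  induction n with
  | zero => simp [dfall_zero]
  | succ n ih =>
    have key : ∀ k ∈ range (n+1),
        (n.choose k : ℝ) * dfall l x k * dfall l y (n - k) * (x + y - n * l)
          = (n.choose k : ℝ) * dfall l x (k+1) * dfall l y (n - k)
            + (n.choose k : ℝ) * dfall l x k * dfall l y (n - k + 1) := by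
      intro k hk
      rw [mem_range] at hk
      have hk' : k ≤ n := Nat.lt_succ_iff.mp hk
      have hcast : ((n - k : ℕ) : ℝ) = (n : ℝ) - k := by
        push_cast [Nat.cast_sub hk']; ring
      rw [dfall_succ, dfall_succ, hcast]
      ring
    have lhs : dfall l (x + y) (n+1)
        = ∑ k ∈ range (n+1), ((n.choose k : ℝ) * dfall l x (k+1) * dfall l y (n - k)
            + (n.choose k : ℝ) * dfall l x k * dfall l y (n - k + 1)) := by
      rw [dfall_succ, ih, Finset.sum_mul]
      exact Finset.sum_congr rfl key
    rw [lhs, Finset.sum_add_distrib]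
    -- RHS : ∑ k in range (n+2), C(n+1,k) X k Y (n+1-k)
    rw [Finset.sum_range_succ' (fun k => ((n+1).choose k : ℝ) * dfall l x k * dfall l y (n + 1 - k))]
    simp only [Nat.choose_succ_succ, Nat.cast_add, Nat.succ_sub_succ]
    rw [Nat.choose_zero_right]
    have h1 : ∑ k ∈ range (n+1), (((n.choose k : ℝ) + (n.choose (k+1) : ℝ)) * dfall l x (k+1) * dfall l y (n - k))
        = ∑ k ∈ range (n+1), ((n.choose k : ℝ) * dfall l x (k+1) * dfall l y (n - k))
          + ∑ k ∈ range (n+1), ((n.choose (k+1) : ℝ) * dfall l x (k+1) * dfall l y (n - k)) := by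
      rw [← Finset.sum_add_distrib]; exact Finset.sum_congr rfl fun k _ => by ring
    have h2 : ∑ k ∈ range (n+1), ((n.choose (k+1) : ℝ) * dfall l x (k+1) * dfall l y (n - k))
        = ∑ k ∈ range n, ((n.choose (k+1) : ℝ) * dfall l x (k+1) * dfall l y (n - k)) := by
      rw [Finset.sum_range_succ]; simp
    have h3 : ∑ k ∈ range (n+1), ((n.choose k : ℝ) * dfall l x k * dfall l y (n - k + 1))
        = (dfall l y (n+1))
          + ∑ k ∈ range n, ((n.choose (k+1) : ℝ) * dfall l x (k+1) * dfall l y (n - k)) := by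
      rw [Finset.sum_range_succ' (fun k => (n.choose k : ℝ) * dfall l x k * dfall l y (n - k + 1))]
      simp only [Nat.choose_zero_right, Nat.cast_one, one_mul, dfall_zero, Nat.sub_zero]
      rw [add_comm]
      congr 1
      refine Finset.sum_congr rfl fun k hk => ?_
      rw [mem_range] at hk
      have : n - (k + 1) + 1 = n - k := by omega
      rw [this]
    rw [h3, h1, h2]
    simp only [Nat.sub_zero, dfall_zero, one_mul, mul_one]
    ring

open PowerSeries

lemma degExp_mul (l x y : ℝ) : degExp l x * degExp l y = degExp l (x + y) := by
  ext n
  rw [PowerSeries.coeff_mul]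
  rw [Finset.Nat.sum_antidiagonal_eq_sum_range_succ_mk]
  simp only [degExp, coeff_mk]
  rw [dfall_vand, Finset.sum_div]
  refine Finset.sum_congr rfl fun k hk => ?_
  rw [mem_range] at hk
  have hk' : k ≤ n := Nat.lt_succ_iff.mp hk
  have hcast : (n.choose k : ℝ) * k.factorial * (n-k).factorial = n.factorial := by
    exact_mod_cast Nat.choose_mul_factorial_mul_factorial hk'
  have h1 : (k.factorial : ℝ) ≠ 0 := by exact_mod_cast k.factorial_ne_zero
  have h2 : ((n-k).factorial : ℝ) ≠ 0 := by exact_mod_cast (n-k).factorial_ne_zero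
  have h3 : (n.factorial : ℝ) ≠ 0 := by exact_mod_cast n.factorial_ne_zero
  rw [div_mul_div_comm, div_eq_div_iff (by positivity) (by positivity), ← hcast]
  ring

lemma degExp_zero (l : ℝ) : degExp l 0 = 1 := by
  ext n
  cases n with
  | zero => simp [degExp, coeff_mk, dfall_zero]
  | succ n =>
    have : dfall l 0 (n+1) = 0 := by
      apply Finset.prod_eq_zero (Finset.mem_range.mpr (Nat.succ_pos n))
      simp
    simp [degExp, coeff_mk, this]

/-- with `B x n = β_{n,λ}(x)` the degenerate Bernoulli polynomials
(defined by `t·e_λ^x(t) = (e_λ(t)-1)·∑_n β_{n,λ}(x) t^n/n!`), for `m, n ≥ 0`: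
`∑_{k=0}^m (k)_{n,λ} = (β_{n+1,λ}(m+1) - β_{n+1,λ})/(n+1)`. -/
theorem stmt13 (l : ℝ) (B : ℝ → ℕ → ℝ)
    (hB : ∀ x : ℝ, (PowerSeries.X : PowerSeries ℝ) * degExp l x =
      (degExp l 1 - 1) * PowerSeries.mk (fun n => B x n / n.factorial))
    (m n : ℕ) :
    ∑ k ∈ Finset.range (m + 1), dfall l k n =
      (B ((m : ℝ) + 1) (n + 1) - B 0 (n + 1)) / (n + 1) := by
  set E := degExp l 1 with hE
  have hE1 : E - 1 ≠ 0 := by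
    intro h
    have := congrArg (PowerSeries.coeff 1) h
    simp [hE, degExp, coeff_mk, dfall, map_sub] at this
  have tel : (E - 1) * ∑ k ∈ range (m+1), degExp l k = degExp l ((m:ℝ)+1) - 1 := by
    rw [sub_mul, one_mul, Finset.mul_sum]
    have h1 : ∀ k ∈ range (m+1), E * degExp l (k:ℝ) = degExp l (((k+1 : ℕ)):ℝ) := by
      intro k _
      rw [hE, degExp_mul]
      norm_num [add_comm]
    rw [Finset.sum_congr rfl h1, ← Finset.sum_sub_distrib,
      Finset.sum_range_sub (fun k => degExp l (k:ℝ))]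
    push_cast
    rw [degExp_zero]
  have mksub : (PowerSeries.mk fun j => (B ((m:ℝ)+1) j - B 0 j) / j.factorial)
      = PowerSeries.mk (fun j => B ((m:ℝ)+1) j / j.factorial)
        - PowerSeries.mk (fun j => B 0 j / j.factorial) := by
    ext j
    simp [coeff_mk, sub_div]
  have key : (E - 1) * (PowerSeries.X * ∑ k ∈ range (m+1), degExp l k)
      = (E - 1) * PowerSeries.mk (fun j => (B ((m:ℝ)+1) j - B 0 j) / j.factorial) := by
    rw [mul_left_comm, tel, mksub, mul_sub (E - 1), ← hB, ← hB, degExp_zero]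
    ring
  have hcan := mul_left_cancel₀ hE1 key
  have hco := congrArg (PowerSeries.coeff (n+1)) hcan
  rw [PowerSeries.coeff_succ_X_mul] at hco
  simp only [degExp, map_sum, coeff_mk] at hco
  rw [← Finset.sum_div] at hco
  have h3 : (n.factorial : ℝ) ≠ 0 := by exact_mod_cast n.factorial_ne_zero
  have h4 : ((n:ℝ)+1) ≠ 0 := by positivity
  rw [div_eq_div_iff h3 (by exact_mod_cast (n+1).factorial_ne_zero)] at hco
  rw [Nat.factorial_succ] at hco
  push_cast at hco
  rw [eq_div_iff h4]
  apply mul_right_cancel₀ h3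
  linear_combination hco
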